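/- Let V and W be subspaces of a real inner product space with dim V = dim W = p for some p ≥ 1, and define the angle ∠(V, W) = sup_{v ∈ V, v ≠ 0} inf_{w ∈ W, w ≠ 0} ∠(v, w), where ∠(v,w) ∈ [0, π] is the angle between the vectors v and w. Then 0 ≤ ∠(V,W) ≤ π/2, and ∠(V, W) = π/2 if and only if there exists a nonzero vector w ∈ W orthogonal to V. (This is the characterization of the non-Riemannian metric ∠ on the Grassmannian stated after (2.24) in the paper.) -/

import Mathlib

set_option maxHeartbeats 1000000
open Real InnerProductSpace

/-- The (non-Riemannian) angle between two subspaces of a real inner product space: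
`∠(V, W) = sup_{v ∈ V, v ≠ 0} inf_{w ∈ W, w ≠ 0} ∠(v, w)`, where `∠(v, w) ∈ [0, π]` is
the angle between the vectors `v` and `w` (formula (2.24) of the paper). -/
noncomputable def subspaceAngle {E : Type*} [NormedAddCommGroup E]
    [InnerProductSpace ℝ E] (V W : Submodule ℝ E) : ℝ :=
  ⨆ v : {x : E // x ∈ V ∧ x ≠ 0}, ⨅ w : {x : E // x ∈ W ∧ x ≠ 0},
    InnerProductGeometry.angle (v : E) (w : E)

private theorem arccos_antitone {x y : ℝ} (h : x ≤ y) : Real.arccos y ≤ Real.arccos x := by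
  simp only [Real.arccos]
  have := Real.monotone_arcsin h
  linarith

/-- **The characterization of the angle metric stated after (2.24) in the paper.**
For subspaces `V`, `W` of the same dimension `p ≥ 1`, the angle `∠(V, W)` lies in
`[0, π/2]`, and it equals `π/2` if and only if some nonzero vector of `W` is orthogonal
to `V`. -/
theorem subspaceAngle_le_pi_div_two_and_eq_iff {E : Type*} [NormedAddCommGroup E]
    [InnerProductSpace ℝ E] (V W : Submodule ℝ E)
    [FiniteDimensional ℝ V] [FiniteDimensional ℝ W] (p : ℕ) (hp : 1 ≤ p)
    (hV : Module.finrank ℝ V = p) (hW : Module.finrank ℝ W = p) :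
    0 ≤ subspaceAngle V W ∧ subspaceAngle V W ≤ π / 2 ∧
      (subspaceAngle V W = π / 2 ↔ ∃ w : E, w ∈ W ∧ w ≠ 0 ∧ w ∈ Vᗮ) := by
  classical
  have hVbot : V ≠ ⊥ := by
    intro h
    rw [h, finrank_bot] at hV
    omega
  have hWbot : W ≠ ⊥ := by
    intro h
    rw [h, finrank_bot] at hW
    omega
  obtain ⟨v0, hv0, hv0'⟩ := Submodule.exists_mem_ne_zero_of_ne_bot hVbot
  obtain ⟨w0, hw0, hw0'⟩ := Submodule.exists_mem_ne_zero_of_ne_bot hWbot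
  haveI : Nonempty {x : E // x ∈ V ∧ x ≠ 0} := ⟨⟨v0, hv0, hv0'⟩⟩
  haveI : Nonempty {x : E // x ∈ W ∧ x ≠ 0} := ⟨⟨w0, hw0, hw0'⟩⟩
  set A : {x : E // x ∈ V ∧ x ≠ 0} → ℝ := fun v =>
    ⨅ w : {x : E // x ∈ W ∧ x ≠ 0}, InnerProductGeometry.angle (v : E) (w : E) with hA
  have hSdef : subspaceAngle V W = ⨆ v, A v := rfl
  have hbdd : ∀ v : {x : E // x ∈ V ∧ x ≠ 0},
      BddBelow (Set.range fun w : {x : E // x ∈ W ∧ x ≠ 0} =>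
        InnerProductGeometry.angle (v : E) (w : E)) := by
    intro v
    refine ⟨0, ?_⟩
    rintro x ⟨w, rfl⟩
    exact InnerProductGeometry.angle_nonneg _ _
  have hAnonneg : ∀ v, 0 ≤ A v := fun v =>
    Real.iInf_nonneg fun w => InnerProductGeometry.angle_nonneg _ _
  have hAle : ∀ v, A v ≤ π / 2 := by
    intro v
    rcases le_or_gt (InnerProductGeometry.angle (v : E) w0) (π / 2) with h | h
    · exact le_trans (ciInf_le (hbdd v) ⟨w0, hw0, hw0'⟩) h
    · have h1 : A v ≤ InnerProductGeometry.angle (v : E) (-w0) :=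
        ciInf_le (hbdd v) ⟨-w0, W.neg_mem hw0, neg_ne_zero.mpr hw0'⟩
      rw [InnerProductGeometry.angle_neg_right] at h1
      linarith
  have hbddA : BddAbove (Set.range A) := by
    refine ⟨π / 2, ?_⟩
    rintro x ⟨v, rfl⟩
    exact hAle v
  have hSle : subspaceAngle V W ≤ π / 2 := by
    rw [hSdef]; exact ciSup_le hAle
  have hS0 : 0 ≤ subspaceAngle V W := by
    rw [hSdef]
    exact le_trans (hAnonneg ⟨v0, hv0, hv0'⟩) (le_ciSup hbddA _)
  refine ⟨hS0, hSle, ?_, ?_⟩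
  · -- forward direction, by contraposition
    intro hSeq
    by_contra hno
    push_neg at hno
    -- the projection onto V restricted to W is injective, hence bijective
    set g : W →ₗ[ℝ] V := (Submodule.orthogonalProjectionOnto V).toLinearMap.comp W.subtype with hg
    have hginj : Function.Injective g := by
      rw [← LinearMap.ker_eq_bot]
      rw [Submodule.eq_bot_iff]
      intro u hu
      have h1 : Submodule.orthogonalProjectionOnto V (u : E) = 0 := hu
      have h2 : (u : E) ∈ Vᗮ := Submodule.orthogonalProjectionOnto_eq_zero_iff.mp h1
      by_contra hne
      have hcoe : (u : E) ≠ 0 := by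
        simpa [Submodule.coe_eq_zero] using hne
      exact (hno (u : E) u.2 hcoe) h2
    have hgsurj : Function.Surjective g :=
      (LinearMap.injective_iff_surjective_of_finrank_eq_finrank (by rw [hV, hW])).mp hginj
    have hsec : ∃ (C : ℝ) (s : V → W), 0 < C ∧ (∀ x : V, g (s x) = x) ∧
        ∀ x : V, ‖((s x : W) : E)‖ ≤ C * ‖(x : E)‖ := by
      set e : W ≃ₗ[ℝ] V := LinearEquiv.ofBijective g ⟨hginj, hgsurj⟩ with he
      set φ : V →L[ℝ] W := LinearMap.toContinuousLinearMap (e.symm : V →ₗ[ℝ] W) with hφ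
      refine ⟨max ‖φ‖ 1, fun x => φ x, lt_of_lt_of_le one_pos (le_max_right _ _), ?_, ?_⟩
      · intro x
        have h : e (e.symm x) = x := e.apply_symm_apply x
        exact h
      · intro x
        have h1 : ‖φ x‖ ≤ ‖φ‖ * ‖x‖ := φ.le_opNorm x
        calc ‖((φ x : W) : E)‖ = ‖φ x‖ := rfl
          _ ≤ ‖φ‖ * ‖x‖ := h1
          _ ≤ max ‖φ‖ 1 * ‖x‖ := mul_le_mul_of_nonneg_right (le_max_left _ _) (norm_nonneg _)
          _ = max ‖φ‖ 1 * ‖(x : E)‖ := rfl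
    obtain ⟨C, sec, hCpos, hgs, hsb⟩ := hsec
    -- every nonzero v in V makes an angle ≤ arccos (1/C) with some w in W
    have key : ∀ v : {x : E // x ∈ V ∧ x ≠ 0}, A v ≤ Real.arccos (1 / C) := by
      intro v
      set vV : V := ⟨v.1, v.2.1⟩ with hvV
      have hvne : vV ≠ 0 := by
        intro h
        exact v.2.2 (by simpa [hvV, Submodule.coe_eq_zero] using congrArg Subtype.val h)
      set u : W := sec vV with hu
      have hgu : g u = vV := hgs vV
      have hune : u ≠ 0 := by
        intro h
        rw [h, map_zero] at hgu
        exact hvne hgu.symm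
      have hucoe : (u : E) ≠ 0 := by simpa [Submodule.coe_eq_zero] using hune
      -- inner product computation: ⟪v, u⟫ = ‖v‖ ^ 2
      have hproj : ((Submodule.orthogonalProjectionOnto V (u : E)) : E) = (v : E) := by
        have := congrArg (Subtype.val) hgu
        simpa [hg] using this
      have hinner : ⟪(v : E), (u : E)⟫_ℝ = ‖(v : E)‖ ^ 2 := by
        have h1 : ⟪(u : E) - Submodule.orthogonalProjectionOnto V (u : E), (v : E)⟫_ℝ = 0 :=
          Submodule.starProjection_inner_eq_zero (K := V) (u : E) (v : E) v.2.1
        rw [inner_sub_left, hproj, sub_eq_zero] at h1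
        rw [real_inner_comm, h1, real_inner_self_eq_norm_sq]
      have hvnorm : (0 : ℝ) < ‖(v : E)‖ := norm_pos_iff.mpr v.2.2
      have hunorm : (0 : ℝ) < ‖(u : E)‖ := norm_pos_iff.mpr hucoe
      have hub : ‖(u : E)‖ ≤ C * ‖(v : E)‖ := hsb vV
      have hcos : 1 / C ≤ Real.cos (InnerProductGeometry.angle (v : E) (u : E)) := by
        rw [InnerProductGeometry.cos_angle, hinner]
        rw [div_le_div_iff₀ hCpos (by positivity)]
        nlinarith [hub, hvnorm.le, hunorm.le, mul_le_mul_of_nonneg_left hub hvnorm.le]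
      have hangle : InnerProductGeometry.angle (v : E) (u : E) ≤ Real.arccos (1 / C) := by
        have h1 := arccos_antitone hcos
        rwa [Real.arccos_cos (InnerProductGeometry.angle_nonneg _ _)
          (InnerProductGeometry.angle_le_pi _ _)] at h1
      exact le_trans (ciInf_le (hbdd v) ⟨(u : E), u.2, hucoe⟩) hangle
    have hSle2 : subspaceAngle V W ≤ Real.arccos (1 / C) := by
      rw [hSdef]; exact ciSup_le key
    have hlt : Real.arccos (1 / C) < π / 2 :=
      Real.arccos_lt_pi_div_two.mpr (by positivity)
    rw [hSeq] at hSle2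
    linarith
  · -- reverse direction
    rintro ⟨w, hwW, hwne, hwperp⟩
    -- the projection onto W restricted to V is not injective
    set f : V →ₗ[ℝ] W := (Submodule.orthogonalProjectionOnto W).toLinearMap.comp V.subtype with hf
    have hfninj : ¬ Function.Injective f := by
      intro hinj
      have hsurj : Function.Surjective f :=
        (LinearMap.injective_iff_surjective_of_finrank_eq_finrank (by rw [hV, hW])).mp hinj
      obtain ⟨v, hv⟩ := hsurj ⟨w, hwW⟩
      have hproj : ((Submodule.orthogonalProjectionOnto W (v : E)) : E) = w := by
        have := congrArg (Subtype.val) hv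
        simpa [hf] using this
      have h1 : ⟪(v : E) - Submodule.orthogonalProjectionOnto W (v : E), w⟫_ℝ = 0 :=
        Submodule.starProjection_inner_eq_zero (K := W) (v : E) w hwW
      rw [inner_sub_left, hproj, sub_eq_zero] at h1
      have h2 : ⟪(v : E), w⟫_ℝ = 0 := hwperp (v : E) v.2
      rw [h2] at h1
      exact hwne (inner_self_eq_zero.mp h1.symm)
    have hker : LinearMap.ker f ≠ ⊥ := fun h => hfninj (LinearMap.ker_eq_bot.mp h)
    obtain ⟨x, hx, hxne⟩ := Submodule.exists_mem_ne_zero_of_ne_bot hker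
    have hx0 : Submodule.orthogonalProjectionOnto W (x : E) = 0 := hx
    have hxperp : (x : E) ∈ Wᗮ := Submodule.orthogonalProjectionOnto_eq_zero_iff.mp hx0
    have hxcoe : (x : E) ≠ 0 := by simpa [Submodule.coe_eq_zero] using hxne
    set vx : {y : E // y ∈ V ∧ y ≠ 0} := ⟨(x : E), x.2, hxcoe⟩ with hvx
    have hAvx : A vx = π / 2 := by
      refine le_antisymm (hAle vx) (le_ciInf fun w' => ?_)
      have : ⟪(x : E), (w' : E)⟫_ℝ = 0 := by
        rw [real_inner_comm]
        exact hxperp (w' : E) w'.2.1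
      rw [(InnerProductGeometry.inner_eq_zero_iff_angle_eq_pi_div_two _ _).mp this]
    have : π / 2 ≤ subspaceAngle V W := by
      rw [hSdef, ← hAvx]
      exact le_ciSup hbddA vx
    linarith
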